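/- The monoid M_2(𝕋) is a regular semigroup in the sense of Von Neumann: for every A ∈ M_2(𝕋) there exists B ∈ M_2(𝕋) such that A·B·A = A and B·A·B = B (tropical matrix products). -/

import Mathlib

/-- The tropical semiring `𝕋 = ℝ ∪ {−∞}` (addition = max, multiplication = +,
with `⊥ = −∞` absorbing for `+`). -/
abbrev Trop : Type := WithBot ℝ

/-- Tropical product of 2×2 matrices: `(A⊙B)_{ik} = max_j (a_{ij} + b_{jk})`. -/
noncomputable def tmul (A B : Matrix (Fin 2) (Fin 2) Trop) : Matrix (Fin 2) (Fin 2) Trop :=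
  Matrix.of fun i k => max (A i 0 + B 0 k) (A i 1 + B 1 k)

namespace TropAux

/-- tropical adjugate -/
noncomputable def tadj (A : Matrix (Fin 2) (Fin 2) Trop) : Matrix (Fin 2) (Fin 2) Trop :=
  Matrix.of ![![A 1 1, A 0 1], ![A 1 0, A 0 0]]

/-- tropical determinant (permanent) -/
noncomputable def tdet (A : Matrix (Fin 2) (Fin 2) Trop) : Trop :=
  max (A 0 0 + A 1 1) (A 0 1 + A 1 0)

lemma tmul_apply (A B : Matrix (Fin 2) (Fin 2) Trop) (i k : Fin 2) :
    tmul A B i k = max (A i 0 + B 0 k) (A i 1 + B 1 k) := rfl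

/-- key identity: `A ⊙ adj A ⊙ A = det A + A` -/
lemma key (A : Matrix (Fin 2) (Fin 2) Trop) :
    tmul (tmul A (tadj A)) A = Matrix.of fun i k => tdet A + A i k := by
  set a := A 0 0 with ha; set b := A 0 1 with hb; set c := A 1 0 with hc
  set d := A 1 1 with hd
  have hD1 : a + d ≤ max (a + d) (b + c) := le_max_left _ _
  have hD2 : b + c ≤ max (a + d) (b + c) := le_max_right _ _
  funext i k
  fin_cases i <;> fin_cases k <;>
    simp only [tmul_apply, tadj, tdet, Matrix.of_apply, Matrix.cons_val', Matrix.cons_val_zero,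
      Matrix.cons_val_one, Matrix.head_cons, Matrix.empty_val', Matrix.cons_val_fin_one,
      Matrix.head_fin_const, ← ha, ← hb, ← hc, ← hd]
  · show max (max (a + d) (b + c) + a) (max (a + b) (b + a) + c) = max (a + d) (b + c) + a
    rw [add_comm a b, max_self, max_eq_left]
    calc b + a + c = b + c + a := by abel
      _ ≤ max (a + d) (b + c) + a := add_le_add_left hD2 a
  · show max (max (a + d) (b + c) + b) (max (a + b) (b + a) + d) = max (a + d) (b + c) + b
    rw [add_comm a b, max_self, max_eq_left]
    calc b + a + d = a + d + b := by abel
      _ ≤ max (a + d) (b + c) + b := add_le_add_left hD1 b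
  · show max (max (c + d) (d + c) + a) (max (c + b) (d + a) + c) = max (a + d) (b + c) + c
    rw [add_comm c d, max_self]
    have h1 : d + c + a ≤ max (a + d) (b + c) + c := by
      calc d + c + a = a + d + c := by abel
        _ ≤ max (a + d) (b + c) + c := add_le_add_left hD1 c
    have h2 : max (c + b) (d + a) + c = max (a + d) (b + c) + c := by
      rw [add_comm c b, add_comm d a, max_comm]
    rw [h2, max_eq_right h1]
  · show max (max (c + d) (d + c) + b) (max (c + b) (d + a) + d) = max (a + d) (b + c) + d
    rw [add_comm c d, max_self]
    have h1 : d + c + b ≤ max (a + d) (b + c) + d := by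
      calc d + c + b = b + c + d := by abel
        _ ≤ max (a + d) (b + c) + d := add_le_add_left hD2 d
    have h2 : max (c + b) (d + a) + d = max (a + d) (b + c) + d := by
      rw [add_comm c b, add_comm d a, max_comm]
    rw [h2, max_eq_right h1]

lemma tadj_tadj (A : Matrix (Fin 2) (Fin 2) Trop) : tadj (tadj A) = A := by
  funext i k
  fin_cases i <;> fin_cases k <;> rfl

lemma tdet_tadj (A : Matrix (Fin 2) (Fin 2) Trop) : tdet (tadj A) = tdet A := by
  have e1 : tadj A 0 0 = A 1 1 := rfl
  have e2 : tadj A 0 1 = A 0 1 := rfl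
  have e3 : tadj A 1 0 = A 1 0 := rfl
  have e4 : tadj A 1 1 = A 0 0 := rfl
  rw [tdet, tdet, e1, e2, e3, e4, add_comm (A 1 1), add_comm (A 0 1)]

/-- second key identity: `adj A ⊙ A ⊙ adj A = det A + adj A` -/
lemma key' (A : Matrix (Fin 2) (Fin 2) Trop) :
    tmul (tmul (tadj A) A) (tadj A) = Matrix.of fun i k => tdet A + tadj A i k := by
  have := key (tadj A)
  rwa [tadj_tadj, tdet_tadj] at this

/-- translating the right factor translates the product -/
lemma tmul_right_add (A B : Matrix (Fin 2) (Fin 2) Trop) (t : Trop) :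
    tmul A (Matrix.of fun i k => B i k + t) = Matrix.of fun i k => tmul A B i k + t := by
  funext i k
  simp only [tmul_apply, Matrix.of_apply, ← add_assoc, max_add_add_right]

/-- translating the left factor translates the product -/
lemma tmul_left_add (A B : Matrix (Fin 2) (Fin 2) Trop) (t : Trop) :
    tmul (Matrix.of fun i k => A i k + t) B = Matrix.of fun i k => tmul A B i k + t := by
  funext i k
  simp only [tmul_apply, Matrix.of_apply]
  rw [add_right_comm (A i 0), add_right_comm (A i 1), max_add_add_right]

lemma coe_cancel (r : ℝ) : ((r : ℝ) : Trop) + ((-r : ℝ) : Trop) = 0 := by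
  rw [← WithBot.coe_add]; norm_num

lemma coe_cancel' (r : ℝ) : ((-r : ℝ) : Trop) + ((r : ℝ) : Trop) = 0 := by
  rw [← WithBot.coe_add]; norm_num

lemma cancel_mid (r : ℝ) (x y : Trop) : x + ((-r : ℝ) : Trop) + ((r : ℝ) : Trop) + y = x + y := by
  rw [add_assoc x, coe_cancel', add_zero]

lemma cancel_left (r : ℝ) (x : Trop) : ((r : ℝ) : Trop) + ((-r : ℝ) : Trop) + x = x := by
  rw [coe_cancel, zero_add]

lemma cancel_right' (r : ℝ) (x : Trop) : x + ((r : ℝ) : Trop) + ((-r : ℝ) : Trop) = x := by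
  rw [add_assoc, coe_cancel, add_zero]

lemma cancel_outer (r : ℝ) (x : Trop) : ((r : ℝ) : Trop) + x + ((-r : ℝ) : Trop) = x := by
  rw [add_right_comm, coe_cancel, zero_add]

lemma cancel_right (r : ℝ) (x : Trop) : x + ((-r : ℝ) : Trop) + ((r : ℝ) : Trop) = x := by
  rw [add_assoc, coe_cancel', add_zero]

/-- the degenerate (⊥-determinant) case: a single-entry `B` is a generalized inverse,
provided the tropical determinant is "singular": `a+d = b+c`. -/
lemma single_geninv (A : Matrix (Fin 2) (Fin 2) Trop) (i j : Fin 2) (r : ℝ)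
    (hA : A i j = ((r : ℝ) : Trop))
    (hcross : A 0 0 + A 1 1 = A 0 1 + A 1 0) :
    ∃ B : Matrix (Fin 2) (Fin 2) Trop,
      tmul (tmul A B) A = A ∧ tmul (tmul B A) B = B := by
  have h4 : A 0 0 + A 1 1 = A 0 1 + A 1 0 := hcross
  have h5 : A 1 1 + A 0 0 = A 0 1 + A 1 0 := by rw [add_comm]; exact hcross
  have h6 : A 0 1 + A 1 0 = A 0 0 + A 1 1 := hcross.symm
  have h7 : A 1 0 + A 0 1 = A 0 0 + A 1 1 := by rw [add_comm]; exact hcross.symm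
  refine ⟨Matrix.of fun p q => if p = j ∧ q = i then ((-r : ℝ) : Trop) else ⊥, ?_, ?_⟩ <;>
    [skip; skip] <;>
    (funext p q) <;>
    fin_cases i <;> fin_cases j <;> fin_cases p <;> fin_cases q <;>
    simp only [tmul_apply, Matrix.of_apply, Fin.mk_zero, Fin.mk_one, Fin.isValue,
      show ((0:Fin 2) = 1) = False by simp, show ((1:Fin 2) = 0) = False by simp,
      show ((0:Fin 2) = 0) = True by simp, show ((1:Fin 2) = 1) = True by simp,
      if_true, if_false, and_true, and_false, true_and, false_and, and_self,
      WithBot.bot_add, WithBot.add_bot, max_bot_left, max_bot_right,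
      sup_bot_eq, bot_sup_eq] <;>
    (try simp only [Fin.mk_zero, Fin.mk_one, Fin.isValue] at hA) <;>
    first
    | rfl
    | (rw [hA]
       first
       | exact cancel_left _ _
       | exact cancel_right _ _
       | rw [coe_cancel', zero_add])
    | (rw [add_right_comm]
       first
       | rw [h4]
       | rw [h5]
       | rw [h6]
       | rw [h7]
       rw [hA]
       first
       | exact cancel_right _ _
       | exact cancel_right' _ _
       | exact cancel_outer _ _)

end TropAux

open TropAux in
/-- `M₂(𝕋)` is a regular semigroup in the sense of Von Neumann: every `A` has a
generalized inverse `B`, i.e. `A⊙B⊙A = A` and `B⊙A⊙B = B`. -/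
theorem stmt3 (A : Matrix (Fin 2) (Fin 2) Trop) :
    ∃ B : Matrix (Fin 2) (Fin 2) Trop,
      tmul (tmul A B) A = A ∧ tmul (tmul B A) B = B := by
  by_cases hD : tdet A = ⊥
  · -- degenerate case
    have hboth : A 0 0 + A 1 1 = ⊥ ∧ A 0 1 + A 1 0 = ⊥ := by
      constructor
      · exact le_bot_iff.mp (hD ▸ le_max_left _ _)
      · exact le_bot_iff.mp (hD ▸ le_max_right _ _)
    have hcross : A 0 0 + A 1 1 = A 0 1 + A 1 0 := by rw [hboth.1, hboth.2]
    -- pick a finite entry if one exists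
    by_cases h00 : ∃ r : ℝ, A 0 0 = ((r : ℝ) : Trop)
    · obtain ⟨r, hr⟩ := h00; exact single_geninv A 0 0 r hr hcross
    by_cases h01 : ∃ r : ℝ, A 0 1 = ((r : ℝ) : Trop)
    · obtain ⟨r, hr⟩ := h01; exact single_geninv A 0 1 r hr hcross
    by_cases h10 : ∃ r : ℝ, A 1 0 = ((r : ℝ) : Trop)
    · obtain ⟨r, hr⟩ := h10; exact single_geninv A 1 0 r hr hcross
    by_cases h11 : ∃ r : ℝ, A 1 1 = ((r : ℝ) : Trop)
    · obtain ⟨r, hr⟩ := h11; exact single_geninv A 1 1 r hr hcross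
    -- all entries are ⊥
    have hbot : ∀ p q : Fin 2, A p q = ⊥ := by
      intro p q
      fin_cases p <;> fin_cases q
      · cases h : A 0 0 with
        | none => exact h
        | some r => exact absurd ⟨r, h⟩ h00
      · cases h : A 0 1 with
        | none => exact h
        | some r => exact absurd ⟨r, h⟩ h01
      · cases h : A 1 0 with
        | none => exact h
        | some r => exact absurd ⟨r, h⟩ h10
      · cases h : A 1 1 with
        | none => exact h
        | some r => exact absurd ⟨r, h⟩ h11
    refine ⟨A, ?_, ?_⟩ <;>
      · funext p q
        simp [tmul_apply, hbot]
  · -- nondegenerate case: B = adj A − det A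
    obtain ⟨r, hr⟩ : ∃ r : ℝ, tdet A = ((r : ℝ) : Trop) := by
      cases h : tdet A with
      | none => exact absurd h hD
      | some r => exact ⟨r, rfl⟩
    set t : Trop := ((-r : ℝ) : Trop) with ht
    have hDt : tdet A + t = 0 := by rw [hr, ht, ← WithBot.coe_add]; norm_num
    refine ⟨Matrix.of fun i k => tadj A i k + t, ?_, ?_⟩
    · rw [tmul_right_add, tmul_left_add]
      funext i k
      simp only [Matrix.of_apply]
      rw [key]
      simp only [Matrix.of_apply]
      rw [add_right_comm, hDt, zero_add]
    · rw [tmul_left_add, tmul_right_add, tmul_left_add]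
      funext i k
      simp only [Matrix.of_apply]
      rw [key']
      simp only [Matrix.of_apply]
      rw [add_comm (tdet A) (tadj A i k), add_assoc (tadj A i k), hDt, add_zero]
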